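/- Every real 2×2 matrix Φ with det Φ > 0 can be written as a product of at most five symmetric positive definite real 2×2 matrices. -/

import Mathlib

open Matrix

lemma posDef2 (a b d : ℝ) (ha : 0 < a) (hdet : 0 < a * d - b * b) :
    (!![a, b; b, d] : Matrix (Fin 2) (Fin 2) ℝ).PosDef := by
  rw [posDef_iff_dotProduct_mulVec]
  constructor
  · ext i j
    fin_cases i <;> fin_cases j <;> rfl
  · intro x hx
    have hx' : x 0 ≠ 0 ∨ x 1 ≠ 0 := by
      by_contra h
      push_neg at h
      exact hx (funext fun i => by fin_cases i <;> simp [h.1, h.2])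
    have he : dotProduct (star x) ((!![a, b; b, d] : Matrix (Fin 2) (Fin 2) ℝ) *ᵥ x)
        = a * x 0 * x 0 + b * x 0 * x 1 + b * x 1 * x 0 + d * x 1 * x 1 := by
      simp [dotProduct, mulVec, Fin.sum_univ_two]
      ring
    rw [he]
    rcases eq_or_ne (x 1) 0 with h1 | h1
    · have h0 : x 0 ≠ 0 := by tauto
      rw [h1]
      have := mul_self_pos.2 h0
      nlinarith
    · nlinarith [sq_nonneg (a * x 0 + b * x 1), mul_pos hdet (mul_self_pos.2 h1), ha]


lemma posDef_smul {M : Matrix (Fin 2) (Fin 2) ℝ} (h : M.PosDef) {k : ℝ} (hk : 0 < k) :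
    (k • M).PosDef := by
  refine posDef_iff_dotProduct_mulVec.mpr ⟨?_, fun x hx => ?_⟩
  · show (k • M)ᴴ = k • M
    rw [conjTranspose_smul, h.1]
    simp
  · have : dotProduct (star x) ((k • M) *ᵥ x) = k * dotProduct (star x) (M *ᵥ x) := by
      rw [smul_mulVec, dotProduct_smul, smul_eq_mul]
    rw [this]
    exact mul_pos hk (h.dotProduct_mulVec_pos hx)

lemma two_factor_aux (p00 p01 p11 q00 q01 q11 k a b c d : ℝ)
    (hk : 0 < k)
    (hdetP : 0 < p00 * p11 - p01 * p01)
    (htP : 0 < p00 + p11)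
    (htQ : 0 < q00 + q11)
    (hdetQ : 0 < q00 * q11 - q01 * q01)
    (hprod : (!![p00, p01; p01, p11] : Matrix (Fin 2) (Fin 2) ℝ) * !![q00, q01; q01, q11]
        = k • !![a, b; c, d]) :
    ∃ P Q : Matrix (Fin 2) (Fin 2) ℝ, P.PosDef ∧ Q.PosDef ∧ !![a, b; c, d] = P * Q := by
  have hP00 : 0 < p00 := by nlinarith
  have hQ00 : 0 < q00 := by nlinarith
  refine ⟨!![p00, p01; p01, p11], k⁻¹ • !![q00, q01; q01, q11],
    posDef2 _ _ _ hP00 hdetP, ?_, ?_⟩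
  · exact posDef_smul (posDef2 _ _ _ hQ00 hdetQ) (by positivity : (0:ℝ) < k⁻¹)
  · rw [Matrix.mul_smul, hprod, smul_smul, inv_mul_cancel₀ (ne_of_gt hk), one_smul]

lemma two_factor (a b c d : ℝ) (h1 : 0 < a + d) (h2 : 0 < a * d - b * c)
    (h3 : 4 * (a * d - b * c) < (a + d) ^ 2) :
    ∃ P Q : Matrix (Fin 2) (Fin 2) ℝ, P.PosDef ∧ Q.PosDef ∧ !![a, b; c, d] = P * Q := by
  have hdisc : 0 < (a - d) ^ 2 + 4 * (b * c) := by nlinarith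
  have htP : 0 < (b + c) ^ 2 + (a - d) ^ 2 := by nlinarith [sq_nonneg (b - c)]
  have hk : 0 < ((a - d) ^ 2 + 4 * (b * c)) * ((b + c) ^ 2 + (a - d) ^ 2) / 4 := by positivity
  refine two_factor_aux
    (b * b + b * c + (a - d) ^ 2 / 2) ((a - d) * (c - b) / 2) (c * c + b * c + (a - d) ^ 2 / 2)
    ((c * c + b * c + (a - d) ^ 2 / 2) * a - (a - d) * (c - b) / 2 * c)
    ((c * c + b * c + (a - d) ^ 2 / 2) * b - (a - d) * (c - b) / 2 * d)
    (-((a - d) * (c - b) / 2 * b) + (b * b + b * c + (a - d) ^ 2 / 2) * d)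
    (((a - d) ^ 2 + 4 * (b * c)) * ((b + c) ^ 2 + (a - d) ^ 2) / 4)
    a b c d hk ?_ ?_ ?_ ?_ ?_
  · calc (0:ℝ) < ((a - d) ^ 2 + 4 * (b * c)) * ((b + c) ^ 2 + (a - d) ^ 2) / 4 := hk
      _ = _ := by ring
  · nlinarith
  · have : (0:ℝ) < (a + d) / 2 * ((b + c) ^ 2 + (a - d) ^ 2) := by positivity
    calc (0:ℝ) < (a + d) / 2 * ((b + c) ^ 2 + (a - d) ^ 2) := this
      _ = _ := by ring
  · have : (0:ℝ) < (((a - d) ^ 2 + 4 * (b * c)) * ((b + c) ^ 2 + (a - d) ^ 2) / 4)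
        * (a * d - b * c) := by positivity
    calc (0:ℝ) < _ := this
      _ = _ := by ring
  · ext i j
    fin_cases i <;> fin_cases j <;>
      · simp [mul_apply, Fin.sum_univ_two, Matrix.smul_apply]
        ring

lemma four_factor (a b c d p q r s : ℝ) (hδ : 0 < a * d - b * c)
    (hps : p + s = 3) (hdet : p * s - q * r = 1)
    (hT : a * d - b * c + 2 ≤ a * s - b * r - c * q + d * p) :
    ∃ l : List (Matrix (Fin 2) (Fin 2) ℝ),
      l.length = 4 ∧ (∀ M ∈ l, M.PosDef) ∧ !![a, b; c, d] = l.prod := by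
  obtain ⟨P1, P2, hP1, hP2, hH⟩ :=
    two_factor (a * s - b * r) (-(a * q) + b * p) (c * s - d * r) (-(c * q) + d * p)
      (by linarith) (by
        have : (a * s - b * r) * (-(c * q) + d * p) - (-(a * q) + b * p) * (c * s - d * r)
            = (a * d - b * c) * (p * s - q * r) := by ring
        rw [this, hdet, mul_one]; exact hδ)
      (by nlinarith)
  obtain ⟨P3, P4, hP3, hP4, hG⟩ := two_factor p q r s
    (by rw [hps]; norm_num) (by rw [hdet]; norm_num) (by rw [hdet, hps]; norm_num)
  refine ⟨[P1, P2, P3, P4], rfl, ?_, ?_⟩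
  · intro M hM
    simp only [List.mem_cons, List.not_mem_nil, or_false] at hM
    rcases hM with h | h | h | h <;> subst h <;> assumption
  · have key : (!![a * s - b * r, -(a * q) + b * p; c * s - d * r, -(c * q) + d * p]
        : Matrix (Fin 2) (Fin 2) ℝ) * !![p, q; r, s] = !![a, b; c, d] := by
      ext i j
      fin_cases i <;> fin_cases j <;>
        simp [mul_apply, Fin.sum_univ_two]
      · linear_combination a * hdet
      · linear_combination b * hdet
      · linear_combination c * hdet
      · linear_combination d * hdet
    calc !![a, b; c, d] = _ * !![p, q; r, s] := key.symm
      _ = (P1 * P2) * (P3 * P4) := by rw [hH, hG]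
      _ = [P1, P2, P3, P4].prod := by simp [Matrix.mul_assoc]


lemma exists_G (a b c d : ℝ) (hδ : 0 < a * d - b * c)
    (h : b ≠ 0 ∨ (b = 0 ∧ c ≠ 0) ∨ (b = 0 ∧ c = 0 ∧ a ≠ d)) :
    ∃ p q r s : ℝ, p + s = 3 ∧ p * s - q * r = 1 ∧
      a * d - b * c + 2 ≤ a * s - b * r - c * q + d * p := by
  rcases h with hb | ⟨hb, hc⟩ | ⟨hb, hc, had⟩
  · -- b ≠ 0
    obtain ⟨m, hm⟩ : ∃ m : ℝ, m = |3 * (a + d) / 2| + |b * c| + (a * d - b * c) + 3 := ⟨_, rfl⟩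
    have ha1 := abs_nonneg (3 * (a + d) / 2)
    have ha2 := abs_nonneg (b * c)
    have hm3 : 3 ≤ m := by linarith
    have hm0 : (0:ℝ) < m := by linarith
    refine ⟨3/2, -b/m, -(5*m)/(4*b), 3/2, by norm_num, ?_, ?_⟩
    · field_simp
      ring
    · have hTeq : a * (3/2) - b * (-(5*m)/(4*b)) - c * (-b/m) + d * (3/2)
          = 3 * (a + d) / 2 + 5 * m / 4 + (b * c) / m := by
        field_simp
        ring
      rw [hTeq]
      have h1 : -(|3 * (a + d) / 2|) ≤ 3 * (a + d) / 2 := neg_abs_le _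
      have h2 : -(|b * c|) ≤ (b * c) / m := by
        rw [le_div_iff₀ hm0]
        nlinarith [neg_abs_le (b * c), mul_nonneg ha2 (by linarith : (0:ℝ) ≤ m - 1)]
      have h3 : m ≤ 5 * m / 4 := by linarith
      linarith
  · -- b = 0, c ≠ 0
    subst hb
    obtain ⟨N, hN⟩ : ∃ N : ℝ, N = a * d + 2 + |3 * (a + d) / 2| := ⟨_, rfl⟩
    have ha1 := abs_nonneg (3 * (a + d) / 2)
    have hδ' : 0 < a * d := by linarith [hδ]
    have hN0 : 0 < N := by linarith
    refine ⟨3/2, -N/c, -(5*c)/(4*N), 3/2, by norm_num, ?_, ?_⟩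
    · field_simp
      ring
    · have hTeq : a * (3/2) - 0 * (-(5*c)/(4*N)) - c * (-N/c) + d * (3/2)
          = 3 * (a + d) / 2 + N := by
        field_simp
        ring
      rw [hTeq, hN]
      have h1 : -(|3 * (a + d) / 2|) ≤ 3 * (a + d) / 2 := neg_abs_le _
      linarith
  · -- b = 0, c = 0, a ≠ d
    subst hb; subst hc
    obtain ⟨N, hN⟩ : ∃ N : ℝ, N = a * d + 2 + |3 * (a + d) / 2| := ⟨_, rfl⟩
    have ha1 := abs_nonneg (3 * (a + d) / 2)
    have hda : d - a ≠ 0 := fun hh => had (by linarith)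
    refine ⟨3/2 + N/(d-a), (3/2 + N/(d-a)) * (3/2 - N/(d-a)) - 1, 1, 3/2 - N/(d-a),
      by ring, by ring, ?_⟩
    · have hTeq : a * (3/2 - N/(d-a)) - 0 * 1 - 0 * ((3/2 + N/(d-a)) * (3/2 - N/(d-a)) - 1)
          + d * (3/2 + N/(d-a)) = 3 * (a + d) / 2 + N := by
        field_simp
        ring
      rw [hTeq, hN]
      have h1 : -(|3 * (a + d) / 2|) ≤ 3 * (a + d) / 2 := neg_abs_le _
      linarith


/-- Every real 2×2 matrix `Φ` with `det Φ > 0` can be written as a product of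
at most five symmetric positive definite real 2×2 matrices. -/
theorem two_by_two_eq_product_of_at_most_five_posDef (Φ : Matrix (Fin 2) (Fin 2) ℝ)
    (hΦ : 0 < Φ.det) :
    ∃ l : List (Matrix (Fin 2) (Fin 2) ℝ),
      l.length ≤ 5 ∧ (∀ M ∈ l, M.PosDef) ∧ Φ = l.prod := by
  obtain ⟨a, b, c, d, hΦeta⟩ : ∃ a b c d : ℝ, Φ = !![a, b; c, d] :=
    ⟨Φ 0 0, Φ 0 1, Φ 1 0, Φ 1 1, Matrix.etaExpand_eq Φ ▸ rfl⟩
  subst hΦeta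
  have hδ : 0 < a * d - b * c := by
    have := hΦ
    rwa [Matrix.det_fin_two_of] at this
  by_cases hsc : b = 0 ∧ c = 0 ∧ a = d
  · obtain ⟨hb, hc, had⟩ := hsc
    subst hb; subst hc; subst had
    rcases lt_or_gt_of_ne (fun h : (0:ℝ) = a => by simp [← h] at hδ) with ha | ha
    · -- 0 < a : the matrix itself is positive definite
      refine ⟨[!![a, 0; 0, a]], by norm_num, ?_, by simp⟩
      intro M hM
      simp only [List.mem_singleton] at hM
      subst hM
      exact posDef2 a 0 a ha (by nlinarith)
    · -- a < 0 : factor out a positive diagonal matrix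
      obtain ⟨l₄, hlen, hpd, hprod⟩ :=
        four_factor (-(1/2)) 0 0 (-1) (-8) (-89) 1 11 (by norm_num) (by norm_num)
          (by norm_num) (by norm_num)
      refine ⟨!![-(2*a), 0; 0, -a] :: l₄, by simp [hlen], ?_, ?_⟩
      · intro M hM
        rcases List.mem_cons.mp hM with h | h
        · subst h
          exact posDef2 _ _ _ (by linarith) (by nlinarith)
        · exact hpd M h
      · rw [List.prod_cons, ← hprod]
        ext i j
        fin_cases i <;> fin_cases j <;>
          · simp [mul_apply, Fin.sum_univ_two]
            try ring
  · have h : b ≠ 0 ∨ (b = 0 ∧ c ≠ 0) ∨ (b = 0 ∧ c = 0 ∧ a ≠ d) := by tauto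
    obtain ⟨p, q, r, s, hps, hdet, hT⟩ := exists_G a b c d hδ h
    obtain ⟨l, hlen, hpd, hprod⟩ := four_factor a b c d p q r s hδ hps hdet hT
    exact ⟨l, by simp [hlen], hpd, hprod⟩
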